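/- Let a2 be real, and define g(x,y) = 1 - 2*(1+2*a2^2)*x - 2*a2*y + (1+4*a2^2)*(x+a2*y)^2. On the open region U = {(x,y) in R^2 : g(x,y) > 0}, the function γ(x,y) = g(x,y)^(-5/2) is an integrating factor of the codimension-4 system Q4 given by dx/dt = y - (1+6*a2^2)*x*y + a2*y^2, dy/dt = -x + x^2 + 5*a2*x*y - 2*(1+a2^2)*y^2; that is, ∂/∂x [γ(x,y)*(y - (1+6*a2^2)*x*y + a2*y^2)] + ∂/∂y [γ(x,y)*(-x + x^2 + 5*a2*x*y - 2*(1+a2^2)*y^2)] = 0 for all (x,y) in U. -/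

import Mathlib

/-- On U = {g > 0}, γ = g^(-5/2) is an integrating factor of the
codimension-4 system Q4: dx/dt = y - (1+6a2^2)*x*y + a2*y^2,
dy/dt = -x + x^2 + 5a2*x*y - 2(1+a2^2)*y^2, where
g(x,y) = 1 - 2(1+2a2^2)x - 2a2*y + (1+4a2^2)(x+a2*y)^2. -/
theorem stmt_5 (a2 : ℝ)
    (g : ℝ → ℝ → ℝ)
    (hg : ∀ x y : ℝ, g x y =
      1 - 2*(1 + 2*a2^2)*x - 2*a2*y + (1 + 4*a2^2)*(x + a2*y)^2) :
    ∀ x y : ℝ, g x y > 0 →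
      deriv (fun x' => (g x' y) ^ (-(5:ℝ)/2) *
          (y - (1 + 6*a2^2)*x'*y + a2*y^2)) x
        + deriv (fun y' => (g x y') ^ (-(5:ℝ)/2) *
            (-x + x^2 + 5*a2*x*y' - 2*(1 + a2^2)*y'^2)) y = 0 := by
  intro x y hpos
  have hne : g x y ≠ 0 := ne_of_gt hpos
  -- derivative of g in x
  have hgx : HasDerivAt (fun x' => g x' y)
      (-2*(1 + 2*a2^2) + (1 + 4*a2^2)*(2*(x + a2*y))) x := by
    have heq : (fun x' => g x' y) =
        fun x' => 1 - 2*(1 + 2*a2^2)*x' - 2*a2*y + (1 + 4*a2^2)*(x' + a2*y)^2 :=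
      funext fun x' => hg x' y
    rw [heq]
    have h1 : HasDerivAt (fun x' : ℝ => (x' + a2*y)^2) (2*(x + a2*y)) x := by
      have := ((hasDerivAt_id x).add_const (a2*y)).pow 2
      convert this using 1 <;> (try rfl) <;> (try funext t) <;> (try simp only [id_eq]) <;> (try push_cast) <;> ring
    have h2 : HasDerivAt (fun x' : ℝ => 2*(1 + 2*a2^2)*x') (2*(1 + 2*a2^2)) x := by
      simpa using (hasDerivAt_id x).const_mul (2*(1 + 2*a2^2))
    have := (((hasDerivAt_const x (1:ℝ)).sub h2).sub_const (2*a2*y)).add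
      (h1.const_mul (1 + 4*a2^2))
    convert this using 1 <;> (try rfl) <;> (try funext t) <;> (try simp only [id_eq]) <;> (try push_cast) <;> ring
  have hgy : HasDerivAt (fun y' => g x y')
      (-2*a2 + (1 + 4*a2^2)*(2*(x + a2*y)*a2)) y := by
    have heq : (fun y' => g x y') =
        fun y' => 1 - 2*(1 + 2*a2^2)*x - 2*a2*y' + (1 + 4*a2^2)*(x + a2*y')^2 :=
      funext fun y' => hg x y'
    rw [heq]
    have h1 : HasDerivAt (fun y' : ℝ => (x + a2*y')^2) (2*(x + a2*y)*a2) y := by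
      have h0 : HasDerivAt (fun y' : ℝ => x + a2*y') a2 y := by
        simpa using ((hasDerivAt_id y).const_mul a2).const_add x
      have := h0.pow 2
      convert this using 1 <;> (try rfl) <;> (try funext t) <;> (try simp only [id_eq]) <;> (try push_cast) <;> ring
    have h2 : HasDerivAt (fun y' : ℝ => 2*a2*y') (2*a2) y := by
      simpa using (hasDerivAt_id y).const_mul (2*a2)
    have := (((hasDerivAt_const y (1 - 2*(1 + 2*a2^2)*x)).sub h2)).add
      (h1.const_mul (1 + 4*a2^2))
    convert this using 1 <;> (try rfl) <;> (try funext t) <;> (try simp only [id_eq]) <;> (try push_cast) <;> ring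
  set gx := -2*(1 + 2*a2^2) + (1 + 4*a2^2)*(2*(x + a2*y)) with hgxdef
  set gy := -2*a2 + (1 + 4*a2^2)*(2*(x + a2*y)*a2) with hgydef
  -- rpow derivatives
  have hrx : HasDerivAt (fun x' => (g x' y) ^ (-(5:ℝ)/2))
      (gx * (-(5:ℝ)/2) * g x y ^ (-(5:ℝ)/2 - 1)) x :=
    hgx.rpow_const (Or.inl hne)
  have hry : HasDerivAt (fun y' => (g x y') ^ (-(5:ℝ)/2))
      (gy * (-(5:ℝ)/2) * g x y ^ (-(5:ℝ)/2 - 1)) y :=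
    hgy.rpow_const (Or.inl hne)
  -- P and Q derivatives
  have hP : HasDerivAt (fun x' : ℝ => y - (1 + 6*a2^2)*x'*y + a2*y^2)
      (-(1 + 6*a2^2)*y) x := by
    have h2 : HasDerivAt (fun x' : ℝ => (1 + 6*a2^2)*x'*y) ((1 + 6*a2^2)*y) x := by
      have := (hasDerivAt_id x).const_mul ((1 + 6*a2^2)*y)
      convert this using 1 <;> (try rfl) <;> (try funext t) <;> (try simp only [id_eq]) <;> (try push_cast) <;> ring
    have := ((hasDerivAt_const x y).sub h2).add_const (a2*y^2)
    convert this using 1 <;> (try rfl) <;> (try funext t) <;> (try simp only [id_eq]) <;> (try push_cast) <;> ring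
  have hQ : HasDerivAt (fun y' : ℝ => -x + x^2 + 5*a2*x*y' - 2*(1 + a2^2)*y'^2)
      (5*a2*x - 2*(1 + a2^2)*(2*y)) y := by
    have h1 : HasDerivAt (fun y' : ℝ => 5*a2*x*y') (5*a2*x) y := by
      simpa using (hasDerivAt_id y).const_mul (5*a2*x)
    have h2 : HasDerivAt (fun y' : ℝ => 2*(1 + a2^2)*y'^2) (2*(1 + a2^2)*(2*y)) y := by
      have := ((hasDerivAt_id y).pow 2).const_mul (2*(1 + a2^2))
      convert this using 1 <;> (try rfl) <;> (try funext t) <;> (try simp only [id_eq]) <;> (try push_cast) <;> ring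
    have := ((h1.const_add (-x + x^2)).sub h2)
    convert this using 1 <;> (try rfl) <;> (try funext t) <;> (try simp only [id_eq]) <;> (try push_cast) <;> ring
  have hDx := (hrx.mul hP).deriv
  have hDy := (hry.mul hQ).deriv
  simp only [Pi.mul_def] at hDx hDy
  rw [hDx, hDy]
  -- rewrite exponents
  have he : (-(5:ℝ)/2 - 1) = -(7:ℝ)/2 := by norm_num
  have he2 : g x y ^ (-(5:ℝ)/2) = g x y ^ (-(7:ℝ)/2) * g x y := by
    rw [show (-(5:ℝ)/2) = -(7:ℝ)/2 + 1 by norm_num, Real.rpow_add hpos, Real.rpow_one]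
  rw [he, he2]
  have key : g x y * ((-(1 + 6*a2^2)*y) + (5*a2*x - 2*(1 + a2^2)*(2*y)))
      + (-(5:ℝ)/2) * (gx * (y - (1 + 6*a2^2)*x*y + a2*y^2)
        + gy * (-x + x^2 + 5*a2*x*y - 2*(1 + a2^2)*y^2)) = 0 := by
    rw [hg, hgxdef, hgydef]; ring
  linear_combination (g x y ^ (-(7:ℝ)/2)) * key
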